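/- Let G' and G be bridgeless connected graphs with G a subgraph of G', and let D be a dominating set of both G' and G. Then for every strongly connected orientation H of G there exists a strongly connected orientation H' of G' whose diameter is at most max{diam_0(H,D)+4, diam_1(H,D)+2, diam_2(H,D)}, where diam_i(H,D) denotes the maximum directed distance d_H(u,v) over ordered pairs (u,v) with exactly i of the two vertices lying outside D. -/

import Mathlib

open scoped Classical

/-- `H` is an orientation of the simple graph `G`: every edge gets exactly one direction. -/
structure IsOrientation {V : Type*} (G : SimpleGraph V) (H : V → V → Prop) : Prop where
  le_adj : ∀ u v, H u v → G.Adj u v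
  total : ∀ u v, G.Adj u v → H u v ∨ H v u
  asymm : ∀ u v, H u v → ¬ H v u

/-- A digraph (given by its arc relation) is strongly connected if every vertex is
reachable from every other by a directed path. -/
def StronglyConnected {V : Type*} (H : V → V → Prop) : Prop :=
  ∀ u v : V, Relation.ReflTransGen H u v

/-- Directed distance: length of a shortest directed walk from `u` to `v`. -/
noncomputable def ddist {V : Type*} (H : V → V → Prop) (u v : V) : ℕ :=
  sInf {n | ∃ f : ℕ → V, f 0 = u ∧ f n = v ∧ ∀ i < n, H (f i) (f (i + 1))}

/-- Diameter of a digraph on a finite vertex type. -/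
noncomputable def ddiam {V : Type*} [Fintype V] (H : V → V → Prop) : ℕ :=
  Finset.univ.sup fun p : V × V => ddist H p.1 p.2

/-- The minimum oriented diameter of a graph. -/
noncomputable def minOrientedDiam {V : Type*} [Fintype V] (G : SimpleGraph V) : ℕ :=
  sInf {d | ∃ H : V → V → Prop, IsOrientation G H ∧ StronglyConnected H ∧ ddiam H = d}

/-- A graph is bridgeless if no edge is a bridge. -/
def Bridgeless {V : Type*} (G : SimpleGraph V) : Prop :=
  ∀ e : Sym2 V, ¬ G.IsBridge e

/-- `D` is a dominating set of `G`. -/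
def Dominating {V : Type*} (G : SimpleGraph V) (D : Set V) : Prop :=
  ∀ v ∉ D, ∃ u ∈ D, G.Adj u v

/-- The domination number of a finite graph. -/
noncomputable def dominationNumber {V : Type*} [Fintype V] (G : SimpleGraph V) : ℕ :=
  sInf {n | ∃ D : Finset V, Dominating G ↑D ∧ D.card = n}

/-- `ddiamPart H D i` is the maximum directed distance `d_H(u,v)` over ordered pairs
`(u,v)` of which exactly `i` members lie outside `D`. -/
noncomputable def ddiamPart {V : Type*} [Fintype V] (H : V → V → Prop) (D : Set V)
    (i : ℕ) : ℕ :=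
  Finset.univ.sup fun p : V × V =>
    if (if p.1 ∈ D then 0 else 1) + (if p.2 ∈ D then 0 else 1) = i
    then ddist H p.1 p.2 else 0


namespace OrientExt


/-- a directed walk of length `n` from `u` to `v`. -/
def Reach {α : Type*} (K : α → α → Prop) (n : ℕ) (u v : α) : Prop :=
  ∃ f : ℕ → α, f 0 = u ∧ f n = v ∧ ∀ i < n, K (f i) (f (i + 1))

theorem ddist_eq {V : Type*} (H : V → V → Prop) (u v : V) :
    ddist H u v = sInf {n | Reach H n u v} := rfl

theorem Reach.zero {α : Type*} (K : α → α → Prop) (u : α) : Reach K 0 u u :=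
  ⟨fun _ => u, rfl, rfl, fun i hi => absurd hi (Nat.not_lt_zero i)⟩

theorem Reach.single {α : Type*} {K : α → α → Prop} {u v : α} (h : K u v) :
    Reach K 1 u v := by
  refine ⟨fun i => if i = 0 then u else v, by simp, by simp, ?_⟩
  intro i hi
  interval_cases i
  simpa using h

theorem Reach.tail {α : Type*} {K : α → α → Prop} {n : ℕ} {u v w : α}
    (h : Reach K n u v) (hvw : K v w) : Reach K (n + 1) u w := by
  obtain ⟨f, hf0, hfn, hstep⟩ := h
  refine ⟨fun i => if i ≤ n then f i else w, by simp [hf0], by simp, ?_⟩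
  intro i hi
  rcases lt_or_ge i n with h1 | h1
  · simp only [Nat.le_of_lt h1, if_pos, Nat.succ_le_of_lt h1]
    simpa [Nat.le_of_lt h1, Nat.succ_le_of_lt h1] using hstep i h1
  · have : i = n := le_antisymm (Nat.lt_succ_iff.mp hi) h1
    subst this
    simpa [hfn] using hvw

theorem Reach.comp {α : Type*} {K : α → α → Prop} {m n : ℕ} {u v w : α}
    (h1 : Reach K m u v) (h2 : Reach K n v w) : Reach K (m + n) u w := by
  induction n generalizing w with
  | zero =>
    obtain ⟨f, hf0, hfn, _⟩ := h2
    rw [hf0] at hfn; subst hfn; rw [Nat.add_zero]; exact h1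
  | succ n ih =>
    obtain ⟨f, hf0, hfn, hstep⟩ := h2
    have hmid : Reach K n v (f n) := ⟨f, hf0, rfl, fun i hi => hstep i (Nat.lt_succ_of_lt hi)⟩
    have := (ih hmid).tail (by simpa [hfn] using hstep n (Nat.lt_succ_self n))
    rw [Nat.add_succ]
    exact this

theorem Reach.map {α β : Type*} {K : α → α → Prop} {K' : β → β → Prop} (g : α → β)
    (hg : ∀ a b, K a b → K' (g a) (g b)) {n : ℕ} {u v : α} (h : Reach K n u v) :
    Reach K' n (g u) (g v) := by
  obtain ⟨f, hf0, hfn, hstep⟩ := h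
  exact ⟨g ∘ f, by simp [hf0], by simp [hfn], fun i hi => hg _ _ (hstep i hi)⟩

theorem reach_of_reflTransGen {α : Type*} {K : α → α → Prop} {u v : α}
    (h : Relation.ReflTransGen K u v) : ∃ n, Reach K n u v := by
  induction h with
  | refl => exact ⟨0, Reach.zero K u⟩
  | tail _ hbc ih => obtain ⟨n, hn⟩ := ih; exact ⟨n + 1, hn.tail hbc⟩

theorem Reach.reflTransGen {α : Type*} {K : α → α → Prop} {n : ℕ} {u v : α}
    (h : Reach K n u v) : Relation.ReflTransGen K u v := by
  induction n generalizing v with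
  | zero =>
    obtain ⟨f, hf0, hfn, _⟩ := h
    rw [hf0] at hfn; subst hfn; exact Relation.ReflTransGen.refl
  | succ n ih =>
    obtain ⟨f, hf0, hfn, hstep⟩ := h
    have hmid : Reach K n u (f n) := ⟨f, hf0, rfl, fun i hi => hstep i (Nat.lt_succ_of_lt hi)⟩
    exact (ih hmid).tail (by simpa [hfn] using hstep n (Nat.lt_succ_self n))

theorem ddist_le {V : Type*} {H : V → V → Prop} {n : ℕ} {u v : V}
    (h : Reach H n u v) : ddist H u v ≤ n := Nat.sInf_le h

theorem reach_ddist {V : Type*} {H : V → V → Prop} {u v : V}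
    (h : ∃ n, Reach H n u v) : Reach H (ddist H u v) u v := Nat.sInf_mem h



section Constr

variable {V : Type*} (G' : SimpleGraph V) (S : Set V) (G : SimpleGraph S) (D : Set V)
  (H : S → S → Prop)

/-- chosen dominator of a vertex. -/
noncomputable def dom (v : V) : V :=
  if h : ∃ u ∈ D, G'.Adj u v then h.choose else v

theorem dom_mem {v : V} (h : ∃ u ∈ D, G'.Adj u v) : dom G' D v ∈ D := by
  rw [dom, dif_pos h]; exact h.choose_spec.1

theorem dom_adj {v : V} (h : ∃ u ∈ D, G'.Adj u v) : G'.Adj (dom G' D v) v := by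
  rw [dom, dif_pos h]; exact h.choose_spec.2

/-- `v` has a second neighbour in `D`. -/
def CaseA (v : V) : Prop := ∃ d ∈ D, d ≠ dom G' D v ∧ G'.Adj d v

noncomputable def dom2 (v : V) : V := if h : CaseA G' D v then h.choose else v

theorem dom2_spec {v : V} (h : CaseA G' D v) :
    dom2 G' D v ∈ D ∧ dom2 G' D v ≠ dom G' D v ∧ G'.Adj (dom2 G' D v) v := by
  rw [dom2, dif_pos h]; exact ⟨h.choose_spec.1, h.choose_spec.2.1, h.choose_spec.2.2⟩

/-- `u ∈ S` receives an `H`-arc from a vertex of `D`. -/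
def FromD (u : V) : Prop := ∃ (hu : u ∈ S) (a : S), (a : V) ∈ D ∧ H a ⟨u, hu⟩

/-- `u ∈ S` sends an `H`-arc to a vertex of `D`. -/
def ToD (u : V) : Prop := ∃ (hu : u ∈ S) (a : S), (a : V) ∈ D ∧ H ⟨u, hu⟩ a

/-- cheap in-resource: a neighbour in `S \ D` with an incoming `H`-arc from `D`. -/
def BIn (v : V) : Prop := ∃ u, u ∈ S ∧ u ∉ D ∧ G'.Adj u v ∧ FromD S D H u

/-- cheap out-resource. -/
def BOut (v : V) : Prop := ∃ u, u ∈ S ∧ u ∉ D ∧ G'.Adj u v ∧ ¬ FromD S D H u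

/-- hard vertices: outside `S`, no second `D`-neighbour, no cheap resources. -/
def Hard (v : V) : Prop :=
  v ∉ S ∧ ¬ CaseA G' D v ∧ ¬ BIn G' S D H v ∧ ¬ BOut G' S D H v

/-- polarity of boundary (non-hard, outside-`S`) vertices: `true` = in-star `dom v → v`. -/
noncomputable def polB (v : V) : Bool :=
  if CaseA G' D v then true else if BOut G' S D H v then true else false

/-- `offersB w b`: boundary vertex `w` can serve a user of polarity `b`
(a `true`-user needs a neighbour with an arc to `D`). -/
def OffersB (w : V) (b : Bool) : Prop :=
  CaseA G' D w ∨ (if b then polB G' S D H w = false else polB G' S D H w = true)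

/-- alternating escape walks from hard vertices to the boundary. -/
inductive Alt : Bool → ℕ → V → Prop
  | base {v w : V} {q : Bool} : Hard G' S D H v → G'.Adj v w → w ∉ S →
      ¬ Hard G' S D H w → OffersB G' S D H w q → Alt q 1 v
  | step {v w : V} {q : Bool} {n : ℕ} : Hard G' S D H v → G'.Adj v w →
      Hard G' S D H w → Alt (!q) n w → Alt q (n + 1) v

def NE (q : Bool) (v : V) : Prop := ∃ n, Alt G' S D H q n v

noncomputable def dq (q : Bool) (v : V) : ℕ := sInf {n | Alt G' S D H q n v}

/-- the recurrent set: hard vertices with no escape walks. -/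
def Rset : Set V := {v | Hard G' S D H v ∧ ¬ NE G' S D H true v ∧ ¬ NE G' S D H false v}

theorem exists_mis [Fintype V] :
    ∃ I : Set V, I ⊆ Rset G' S D H ∧ (∀ a ∈ I, ∀ b ∈ I, ¬ G'.Adj a b) ∧
      ∀ v ∈ Rset G' S D H, v ∉ I → ∃ w ∈ I, G'.Adj v w := by
  classical
  set P : Finset V → Prop := fun J => ↑J ⊆ Rset G' S D H ∧ ∀ a ∈ J, ∀ b ∈ J, ¬ G'.Adj a b
    with hP
  have hne : (Finset.univ.filter P).Nonempty := by
    refine ⟨∅, Finset.mem_filter.mpr ⟨Finset.mem_univ _, ?_, ?_⟩⟩ <;> simp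
  obtain ⟨J, hJmem, hJmax⟩ := (Finset.univ.filter P).exists_maximal hne
  have hJP : P J := (Finset.mem_filter.mp hJmem).2
  refine ⟨↑J, hJP.1, fun a ha b hb => hJP.2 a ha b hb, ?_⟩
  intro v hv hvJ
  have hvJ' : v ∉ J := hvJ
  have : ¬ P (insert v J) := by
    intro hPins
    exact hvJ' (hJmax (Finset.mem_filter.mpr ⟨Finset.mem_univ _, hPins⟩)
      (Finset.subset_insert _ _) (Finset.mem_insert_self v J))
  have hsub : ↑(insert v J) ⊆ Rset G' S D H := by
    intro x hx
    rcases Finset.mem_insert.mp hx with h | h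
    · subst h; exact hv
    · exact hJP.1 h
  have hnind : ¬ ∀ a ∈ insert v J, ∀ b ∈ insert v J, ¬ G'.Adj a b :=
    fun h => this ⟨hsub, h⟩
  push_neg at hnind
  obtain ⟨a, ha, b, hb, hab⟩ := hnind
  rcases Finset.mem_insert.mp ha with ha' | ha' <;> rcases Finset.mem_insert.mp hb with hb' | hb'
  · subst ha'; subst hb'; exact absurd hab (G'.irrefl)
  · subst ha'; exact ⟨b, hb', hab⟩
  · subst hb'; exact ⟨a, ha', hab.symm⟩
  · exact absurd hab (hJP.2 a ha' b hb')

/-- a chosen maximal independent subset of the recurrent set. -/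
noncomputable def Iset [Fintype V] : Set V := (exists_mis G' S D H).choose

theorem Iset_spec [Fintype V] :
    Iset G' S D H ⊆ Rset G' S D H ∧
    (∀ a ∈ Iset G' S D H, ∀ b ∈ Iset G' S D H, ¬ G'.Adj a b) ∧
    ∀ v ∈ Rset G' S D H, v ∉ Iset G' S D H → ∃ w ∈ Iset G' S D H, G'.Adj v w :=
  (exists_mis G' S D H).choose_spec

/-- the polarity function: `true` means the star edge is oriented into `v`. -/
noncomputable def pol [Fintype V] (v : V) : Bool :=
  if Hard G' S D H v then
    (if NE G' S D H true v then
      (if NE G' S D H false v then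
        (if dq G' S D H true v < dq G' S D H false v then true
         else if dq G' S D H false v < dq G' S D H true v then false
         else if Even (dq G' S D H true v) then true else false)
       else true)
     else if NE G' S D H false v then false
     else if v ∈ Iset G' S D H then true else false)
  else polB G' S D H v

variable [Fintype V]

def In1 (v : V) : Prop := CaseA G' D v ∨ pol G' S D H v = true

def Out1 (v : V) : Prop := CaseA G' D v ∨ pol G' S D H v = false

noncomputable def ordV (v : V) : ℕ := (Fintype.equivFin V v : ℕ)

theorem ordV_inj {u v : V} (h : ordV u = ordV v) : u = v := by
  have := Fin.val_injective h
  exact (Fintype.equivFin V).injective this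

/-- direction of edges inside `S`. -/
noncomputable def dirSS (u v : V) : Prop :=
  if ∃ (hu : u ∈ S) (hv : v ∈ S), G.Adj ⟨u, hu⟩ ⟨v, hv⟩ then
    ∃ (hu : u ∈ S) (hv : v ∈ S), H ⟨u, hu⟩ ⟨v, hv⟩
  else ordV u < ordV v

/-- whether the edge between `d ∈ D` and `v ∉ S` is oriented `d → v`. -/
noncomputable def dirDX (d v : V) : Prop :=
  if CaseA G' D v then
    (if d = dom G' D v then True else if d = dom2 G' D v then False
     else ordV d < ordV v)
  else pol G' S D H v = true

def F1 (v w : V) : Prop := In1 G' S D H v ∧ Out1 G' S D H w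

/-- direction of edges between two vertices outside `S`. -/
noncomputable def dirXX (v w : V) : Prop :=
  (F1 G' S D H v w ∧ ¬ F1 G' S D H w v) ∨
    ((F1 G' S D H v w ↔ F1 G' S D H w v) ∧ ordV v < ordV w)

/-- the extended orientation. -/
noncomputable def Ext (u v : V) : Prop :=
  G'.Adj u v ∧
    (if u ∈ S then
      (if v ∈ S then dirSS S G H u v
       else (if u ∈ D then dirDX G' S D H u v else FromD S D H u))
     else
      (if v ∈ S then (if v ∈ D then ¬ dirDX G' S D H v u else ¬ FromD S D H v)
       else dirXX G' S D H u v))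

end Constr


section Lemmas

variable {V : Type*} (G' : SimpleGraph V) (S : Set V) (G : SimpleGraph S) (D : Set V)
  (H : S → S → Prop) [Fintype V]

theorem dirSS_not (hH : IsOrientation G H) {u v : V} (hne : u ≠ v) :
    dirSS S G H u v ↔ ¬ dirSS S G H v u := by
  have hcond : (∃ (hu : u ∈ S) (hv : v ∈ S), G.Adj ⟨u, hu⟩ ⟨v, hv⟩) ↔
      (∃ (hv : v ∈ S) (hu : u ∈ S), G.Adj ⟨v, hv⟩ ⟨u, hu⟩) :=
    ⟨fun ⟨hu, hv, h⟩ => ⟨hv, hu, h.symm⟩, fun ⟨hv, hu, h⟩ => ⟨hu, hv, h.symm⟩⟩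
  rw [dirSS, dirSS]
  by_cases h : ∃ (hu : u ∈ S) (hv : v ∈ S), G.Adj ⟨u, hu⟩ ⟨v, hv⟩
  · rw [if_pos h, if_pos (hcond.mp h)]
    constructor
    · rintro ⟨hu, hv, hH1⟩ ⟨hv', hu', hH2⟩
      exact hH.asymm _ _ hH1 hH2
    · intro hn
      obtain ⟨hu, hv, hadj⟩ := h
      rcases hH.total _ _ hadj with h1 | h1
      · exact ⟨hu, hv, h1⟩
      · exact absurd ⟨hv, hu, h1⟩ hn
  · rw [if_neg h, if_neg (fun hh => h (hcond.mpr hh))]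
    have hne' : ordV u ≠ ordV v := fun he => hne (ordV_inj he)
    omega

theorem dirXX_not {u v : V} (hne : u ≠ v) :
    dirXX G' S D H u v ↔ ¬ dirXX G' S D H v u := by
  have hne' : ordV u ≠ ordV v := fun he => hne (ordV_inj he)
  by_cases f1 : F1 G' S D H u v <;> by_cases f2 : F1 G' S D H v u <;>
    simp [dirXX, f1, f2] <;> omega

theorem ext_iff_not (hH : IsOrientation G H) {u v : V} (hadj : G'.Adj u v) :
    Ext G' S G D H u v ↔ ¬ Ext G' S G D H v u := by
  rw [Ext, Ext]
  simp only [hadj, hadj.symm, true_and]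
  by_cases hu : u ∈ S <;> by_cases hv : v ∈ S
  · simp only [if_pos hu, if_pos hv]
    exact dirSS_not S G H hH hadj.ne
  · simp only [if_pos hu, if_neg hv]
    by_cases hd : u ∈ D <;> simp [hd, not_not]
  · simp only [if_neg hu, if_pos hv]
    by_cases hd : v ∈ D <;> simp [hd, not_not]
  · simp only [if_neg hu, if_neg hv]
    exact dirXX_not G' S D H hadj.ne

theorem ext_isOrientation (hH : IsOrientation G H) :
    IsOrientation G' (Ext G' S G D H) := by
  refine ⟨fun u v h => h.1, ?_, ?_⟩
  · intro u v h
    by_cases h1 : Ext G' S G D H u v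
    · exact Or.inl h1
    · exact Or.inr ((ext_iff_not G' S G D H hH h.symm).mpr h1)
  · intro u v h1
    exact (ext_iff_not G' S G D H hH h1.1).mp h1

theorem ext_of_H (hsub : ∀ a b : S, G.Adj a b → G'.Adj (a : V) (b : V))
    (hH : IsOrientation G H) {a b : S} (h : H a b) : Ext G' S G D H (a : V) (b : V) := by
  have hadj : G.Adj a b := hH.le_adj _ _ h
  refine ⟨hsub _ _ hadj, ?_⟩
  rw [if_pos a.2, if_pos b.2, dirSS, if_pos ⟨a.2, b.2, hadj⟩]
  exact ⟨a.2, b.2, h⟩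

end Lemmas

set_option linter.unusedSectionVars false
set_option linter.unusedVariables false

section Star

variable {V : Type*} (G' : SimpleGraph V) (S : Set V) (G : SimpleGraph S) (D : Set V)
  (H : S → S → Prop) [Fintype V]

variable (hDS : D ⊆ S) (hD' : Dominating G' D)

include hDS hD'

theorem dom_spec' {v : V} (hv : v ∉ S) :
    dom G' D v ∈ D ∧ G'.Adj (dom G' D v) v := by
  have h : ∃ u ∈ D, G'.Adj u v := hD' v (fun hvD => hv (hDS hvD))
  exact ⟨dom_mem G' D h, dom_adj G' D h⟩

/-- star arcs for `CaseA` vertices. -/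
theorem caseA_arcs {v : V} (hv : v ∉ S) (hc : CaseA G' D v) :
    Ext G' S G D H (dom G' D v) v ∧ Ext G' S G D H v (dom2 G' D v) := by
  obtain ⟨hdD, hadj⟩ := dom_spec' G' S D hDS hD' hv
  obtain ⟨h2D, h2ne, h2adj⟩ := dom2_spec G' D hc
  constructor
  · refine ⟨hadj, ?_⟩
    rw [if_pos (hDS hdD), if_neg hv, if_pos hdD, dirDX, if_pos hc, if_pos rfl]
    trivial
  · refine ⟨h2adj.symm, ?_⟩
    rw [if_neg hv, if_pos (hDS h2D)]
    rw [if_pos h2D]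
    intro hdir
    rw [dirDX, if_pos hc, if_neg h2ne, if_pos rfl] at hdir
    exact hdir

/-- star arc for non-`CaseA` vertices, incoming when `pol = true`. -/
theorem star_in {v : V} (hv : v ∉ S) (hc : ¬ CaseA G' D v)
    (hp : pol G' S D H v = true) : Ext G' S G D H (dom G' D v) v := by
  obtain ⟨hdD, hadj⟩ := dom_spec' G' S D hDS hD' hv
  refine ⟨hadj, ?_⟩
  rw [if_pos (hDS hdD), if_neg hv, if_pos hdD, dirDX, if_neg hc]
  exact hp

theorem star_out {v : V} (hv : v ∉ S) (hc : ¬ CaseA G' D v)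
    (hp : pol G' S D H v = false) : Ext G' S G D H v (dom G' D v) := by
  obtain ⟨hdD, hadj⟩ := dom_spec' G' S D hDS hD' hv
  refine ⟨hadj.symm, ?_⟩
  rw [if_neg hv, if_pos (hDS hdD), if_pos hdD]
  intro hdir
  rw [dirDX, if_neg hc] at hdir
  rw [hp] at hdir
  exact Bool.false_ne_true hdir

omit hDS hD'

/-- arcs through `S \ D` vertices. -/
theorem sigma_in {u v : V} (hv : v ∉ S) (hu : u ∈ S) (huD : u ∉ D)
    (hadj : G'.Adj u v) (hf : FromD S D H u) : Ext G' S G D H u v := by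
  refine ⟨hadj, ?_⟩
  rw [if_pos hu, if_neg hv, if_neg huD]
  exact hf

theorem sigma_out {u v : V} (hv : v ∉ S) (hu : u ∈ S) (huD : u ∉ D)
    (hadj : G'.Adj u v) (hf : ¬ FromD S D H u) : Ext G' S G D H v u := by
  refine ⟨hadj.symm, ?_⟩
  rw [if_neg hv, if_pos hu, if_neg huD]
  exact hf

/-- arcs between two outside vertices. -/
theorem xx_arc {v w : V} (hv : v ∉ S) (hw : w ∉ S) (hadj : G'.Adj v w)
    (h1 : In1 G' S D H v) (h2 : Out1 G' S D H w)
    (h3 : ¬ (In1 G' S D H w ∧ Out1 G' S D H v)) : Ext G' S G D H v w := by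
  refine ⟨hadj, ?_⟩
  rw [if_neg hv, if_neg hw]
  exact Or.inl ⟨⟨h1, h2⟩, h3⟩

omit [Fintype V] in
/-- every vertex of `S \ D` is `FromD` or `ToD`. -/
theorem fromD_or_toD (hD : Dominating G {a : S | (a : V) ∈ D}) (hH : IsOrientation G H)
    {u : V} (hu : u ∈ S) (huD : u ∉ D) : FromD S D H u ∨ ToD S D H u := by
  have : (⟨u, hu⟩ : S) ∉ {a : S | (a : V) ∈ D} := huD
  obtain ⟨a, haD, hadj⟩ := hD _ this
  rcases hH.total _ _ hadj with h | h
  · exact Or.inl ⟨hu, a, haD, h⟩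
  · exact Or.inr ⟨hu, a, haD, h⟩

end Star

section Serve

set_option linter.unusedSectionVars false

variable {V : Type*} (G' : SimpleGraph V) (S : Set V) (G : SimpleGraph S) (D : Set V)
  (H : S → S → Prop) [Fintype V]

theorem alt_hard {q : Bool} {n : ℕ} {v : V} (h : Alt G' S D H q n v) : Hard G' S D H v := by
  cases h with
  | base hh _ _ _ _ => exact hh
  | step hh _ _ _ => exact hh

theorem alt_step' {q : Bool} {n : ℕ} {v w : V} (hh : Hard G' S D H v) (hadj : G'.Adj v w)
    (hw : Hard G' S D H w) (h : Alt G' S D H q n w) : Alt G' S D H (!q) (n + 1) v := by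
  refine Alt.step hh hadj hw ?_
  rwa [Bool.not_not]

theorem dq_mem {q : Bool} {v : V} (h : NE G' S D H q v) : Alt G' S D H q (dq G' S D H q v) v :=
  Nat.sInf_mem h

theorem dq_le {q : Bool} {n : ℕ} {v : V} (h : Alt G' S D H q n v) : dq G' S D H q v ≤ n :=
  Nat.sInf_le h

theorem boundary_offers {w : V} (hw : w ∉ S) (hnh : ¬ Hard G' S D H w) :
    OffersB G' S D H w true ∨ OffersB G' S D H w false := by
  by_cases hc : CaseA G' D w
  · exact Or.inl (Or.inl hc)
  · rcases Bool.dichotomy (polB G' S D H w) with h | h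
    · exact Or.inl (Or.inr (by simp [h]))
    · exact Or.inr (Or.inr (by simp [h]))

theorem offers_serves {w : V} {q : Bool} (hnh : ¬ Hard G' S D H w)
    (ho : OffersB G' S D H w q) :
    (q = true → Out1 G' S D H w) ∧ (q = false → In1 G' S D H w) := by
  have hpol : pol G' S D H w = polB G' S D H w := by rw [pol, if_neg hnh]
  rcases ho with hc | ho
  · exact ⟨fun _ => Or.inl hc, fun _ => Or.inl hc⟩
  · constructor
    · rintro rfl
      exact Or.inr (by rw [hpol]; simpa using ho)
    · rintro rfl
      exact Or.inr (by rw [hpol]; simpa using ho)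

theorem hard_serves {w : V} {q : Bool} (hh : Hard G' S D H w) (hp : pol G' S D H w = !q) :
    (q = true → Out1 G' S D H w) ∧ (q = false → In1 G' S D H w) := by
  constructor
  · rintro rfl; exact Or.inr (by simpa using hp)
  · rintro rfl; exact Or.inr (by simpa using hp)

/-- every hard vertex has a neighbour outside `S`. -/
theorem hard_neighbor (hG'b : Bridgeless G') (hDS : D ⊆ S) (hD' : Dominating G' D)
    {v : V} (hh : Hard G' S D H v) : ∃ w, G'.Adj v w ∧ w ∉ S := by
  obtain ⟨hdD, hdadj⟩ := dom_spec' G' S D hDS hD' hh.1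
  have hadj : G'.Adj v (dom G' D v) := hdadj.symm
  have hnb := hG'b s(v, dom G' D v)
  rw [SimpleGraph.isBridge_iff] at hnb
  have hreach : (G' \ SimpleGraph.fromEdgeSet {s(v, dom G' D v)}).Reachable v (dom G' D v) := by
    by_contra hr
    exact hnb (fun h => hr h)
  rw [SimpleGraph.reachable_iff_reflTransGen] at hreach
  rcases hreach.cases_head with heq | ⟨w, hstep, _⟩
  · exact absurd heq hadj.ne
  · rw [SimpleGraph.sdiff_adj, SimpleGraph.fromEdgeSet_adj] at hstep
    obtain ⟨hvw, hnot⟩ := hstep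
    have hwne : w ≠ dom G' D v := by
      intro h
      exact hnot ⟨by rw [h]; simp, hvw.ne⟩
    refine ⟨w, hvw, ?_⟩
    intro hwS
    by_cases hwD : w ∈ D
    · exact hh.2.1 ⟨w, hwD, hwne, hvw.symm⟩
    · by_cases hf : FromD S D H w
      · exact hh.2.2.1 ⟨w, hwS, hwD, hvw.symm, hf⟩
      · exact hh.2.2.2 ⟨w, hwS, hwD, hvw.symm, hf⟩

theorem pol_R {v : V} (hh : Hard G' S D H v) (h1 : ¬ NE G' S D H true v)
    (h2 : ¬ NE G' S D H false v) :
    pol G' S D H v = (if v ∈ Iset G' S D H then true else false) := by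
  rw [pol, if_pos hh, if_neg h1, if_neg h2]

theorem pol_notq {v : V} {q : Bool} (hh : Hard G' S D H v) (h1 : NE G' S D H (!q) v)
    (h2 : ¬ NE G' S D H q v) : pol G' S D H v = !q := by
  cases q
  · simp only [Bool.not_false] at h1 ⊢
    rw [pol, if_pos hh, if_pos h1, if_neg h2]
  · simp only [Bool.not_true] at h1 ⊢
    rw [pol, if_pos hh, if_neg h2, if_pos h1]

theorem pol_eq_imp {v : V} {q : Bool} (hh : Hard G' S D H v) (h1 : NE G' S D H q v)
    (h2 : NE G' S D H (!q) v) (hq : pol G' S D H v = q) :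
    dq G' S D H q v ≤ dq G' S D H (!q) v ∧
      (dq G' S D H q v = dq G' S D H (!q) v → (Even (dq G' S D H q v) ↔ q = true)) := by
  cases q
  · simp only [Bool.not_false] at h2 ⊢
    rw [pol, if_pos hh, if_pos h2, if_pos h1] at hq
    by_cases ha : dq G' S D H true v < dq G' S D H false v
    · rw [if_pos ha] at hq; exact absurd hq (by simp)
    · rw [if_neg ha] at hq
      by_cases hb : dq G' S D H false v < dq G' S D H true v
      · exact ⟨le_of_lt hb, fun he => absurd he (by omega)⟩
      · rw [if_neg hb] at hq
        by_cases hc : Even (dq G' S D H true v)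
        · rw [if_pos hc] at hq; exact absurd hq (by simp)
        · refine ⟨le_of_not_gt ha, fun he => ?_⟩
          rw [he]; simp [hc]
  · simp only [Bool.not_true] at h2 ⊢
    rw [pol, if_pos hh, if_pos h1, if_pos h2] at hq
    by_cases ha : dq G' S D H true v < dq G' S D H false v
    · exact ⟨le_of_lt ha, fun he => absurd he (by omega)⟩
    · rw [if_neg ha] at hq
      by_cases hb : dq G' S D H false v < dq G' S D H true v
      · rw [if_pos hb] at hq; exact absurd hq (by simp)
      · rw [if_neg hb] at hq
        by_cases hc : Even (dq G' S D H true v)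
        · exact ⟨le_of_not_gt hb, fun _ => by simp [hc]⟩
        · rw [if_neg hc] at hq; exact absurd hq (by simp)

/-- The serving theorem: each hard vertex has a compatible neighbour outside `S`. -/
theorem serve (hG'b : Bridgeless G') (hDS : D ⊆ S) (hD' : Dominating G' D)
    {v : V} (hh : Hard G' S D H v) :
    (pol G' S D H v = true → ∃ w, G'.Adj v w ∧ w ∉ S ∧ Out1 G' S D H w) ∧
    (pol G' S D H v = false → ∃ w, G'.Adj v w ∧ w ∉ S ∧ In1 G' S D H w) := by
  -- first the escape case, uniform in q
  have key : ∀ q : Bool, NE G' S D H q v → pol G' S D H v = q →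
      ∃ w, G'.Adj v w ∧ w ∉ S ∧ (q = true → Out1 G' S D H w) ∧
        (q = false → In1 G' S D H w) := by
    intro q hNE hq
    have halt := dq_mem G' S D H hNE
    obtain ⟨n, hn⟩ : ∃ n, dq G' S D H q v = n := ⟨_, rfl⟩
    rw [hn] at halt
    cases halt with
    | base hh' hadj hwS hnh ho =>
      rename_i w
      exact ⟨w, hadj, hwS, offers_serves G' S D H hnh ho⟩
    | step hh' hadj hw halt' =>
      rename_i w m
      refine ⟨w, hadj, hw.1, ?_⟩
      -- n = m + 1
      have hNEw : NE G' S D H (!q) w := ⟨m, halt'⟩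
      have hdqw_le : dq G' S D H (!q) w ≤ m := dq_le G' S D H halt'
      have hstep_back : ∀ k, Alt G' S D H (!q) k w → m + 1 ≤ k + 1 := by
        intro k hk
        have := dq_le G' S D H (Alt.step hh hadj (alt_hard G' S D H hk) hk)
        omega
      have hq_to_notq : ∀ k, Alt G' S D H q k w →
          NE G' S D H (!q) v ∧ dq G' S D H (!q) v ≤ k + 1 := by
        intro k hk
        have := alt_step' G' S D H hh hadj (alt_hard G' S D H hk) hk
        exact ⟨⟨k + 1, this⟩, dq_le G' S D H this⟩
      -- show pol w = !q
      have hpolw : pol G' S D H w = !q := by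
        by_cases hNEqw : NE G' S D H q w
        · -- the arithmetic case
          by_contra hne
          have hpw : pol G' S D H w = q := by
            cases q <;> cases hb : pol G' S D H w <;> simp_all
          obtain ⟨hNEnot_v, hdq_not_v⟩ := hq_to_notq _ (dq_mem G' S D H hNEqw)
          obtain ⟨hv1, hv2⟩ := pol_eq_imp G' S D H hh hNE hNEnot_v hq
          obtain ⟨hw1, hw2⟩ := pol_eq_imp G' S D H hw hNEqw hNEw hpw
          -- chains of inequalities
          have e1 : m + 1 ≤ dq G' S D H (!q) w + 1 := hstep_back _ (dq_mem G' S D H hNEw)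
          -- dq (!q) w = m is not needed; use e1 with hdqw_le etc.
          have e2 : dq G' S D H (!q) v ≤ dq G' S D H q w + 1 := hdq_not_v
          -- n = dq q v ≤ dq (!q) v ≤ dq q w + 1 ≤ dq (!q) w + 1 ≤ ... and n ≤ dq(!q) w + 1
          have e3 : m + 1 ≤ dq G' S D H (!q) v := by
            have := hv1
            omega
          have e4 : dq G' S D H q w ≤ dq G' S D H (!q) w := hw1
          -- all equalities
          have heq1 : dq G' S D H q v = dq G' S D H (!q) v := by omega
          have heq2 : dq G' S D H q w = dq G' S D H (!q) w := by omega
          have heq3 : dq G' S D H q v = dq G' S D H q w + 1 := by omega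
          have p1 := hv2 heq1
          have p2 := hw2 heq2
          rw [heq3, Nat.even_add_one] at p1
          rw [p2] at p1
          simp at p1
        · exact pol_notq G' S D H hw hNEw hNEqw
      exact hard_serves G' S D H hw hpolw
  by_cases hNEt : NE G' S D H true v
  · constructor
    · intro hq
      obtain ⟨w, h1, h2, h3, _⟩ := key true hNEt hq
      exact ⟨w, h1, h2, h3 rfl⟩
    · intro hq
      have hNEf : NE G' S D H false v := by
        by_contra hNEf
        have := pol_notq G' S D H (q := false) hh (by simpa using hNEt) hNEf
        simp [hq] at this
      obtain ⟨w, h1, h2, _, h4⟩ := key false hNEf hq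
      exact ⟨w, h1, h2, h4 rfl⟩
  · by_cases hNEf : NE G' S D H false v
    · constructor
      · intro hq
        have := pol_notq G' S D H (q := true) hh (by simpa using hNEf) hNEt
        simp [hq] at this
      · intro hq
        obtain ⟨w, h1, h2, _, h4⟩ := key false hNEf hq
        exact ⟨w, h1, h2, h4 rfl⟩
    · -- recurrent case
      have hvR : v ∈ Rset G' S D H := ⟨hh, hNEt, hNEf⟩
      obtain ⟨hIR, hind, hmax⟩ := Iset_spec G' S D H (V := V)
      have hpol := pol_R G' S D H hh hNEt hNEf
      have hRw : ∀ w, G'.Adj v w → w ∉ S → w ∈ Rset G' S D H := by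
        intro w hadj hwS
        by_cases hwh : Hard G' S D H w
        · refine ⟨hwh, ?_, ?_⟩
          · rintro ⟨k, hk⟩
            exact hNEf ⟨k + 1, alt_step' G' S D H (q := true) hh hadj hwh hk⟩
          · rintro ⟨k, hk⟩
            exact hNEt ⟨k + 1, alt_step' G' S D H (q := false) hh hadj hwh hk⟩
        · rcases boundary_offers G' S D H hwS hwh with ho | ho
          · exact absurd ⟨1, Alt.base hh hadj hwS hwh ho⟩ hNEt
          · exact absurd ⟨1, Alt.base hh hadj hwS hwh ho⟩ hNEf
      constructor
      · intro hq
        have hvI : v ∈ Iset G' S D H := by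
          by_contra hvI
          rw [hpol, if_neg hvI] at hq
          exact Bool.false_ne_true hq
        obtain ⟨w, hadj, hwS⟩ := hard_neighbor G' S D H hG'b hDS hD' hh
        have hwR := hRw w hadj hwS
        have hwI : w ∉ Iset G' S D H := fun hwI => hind v hvI w hwI hadj
        refine ⟨w, hadj, hwS, Or.inr ?_⟩
        rw [pol_R G' S D H hwR.1 hwR.2.1 hwR.2.2, if_neg hwI]
      · intro hq
        have hvI : v ∉ Iset G' S D H := by
          intro hvI
          rw [hpol, if_pos hvI] at hq
          exact Bool.false_ne_true hq.symm
        obtain ⟨w, hwI, hadj⟩ := hmax v hvR hvI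
        have hwR := hIR hwI
        refine ⟨w, hadj, hwR.1.1, Or.inr ?_⟩
        rw [pol_R G' S D H hwR.1 hwR.2.1 hwR.2.2, if_pos hwI]
  
end Serve

section Certs

set_option linter.unusedSectionVars false
set_option linter.unusedVariables false

variable {V : Type*} (G' : SimpleGraph V) (S : Set V) (G : SimpleGraph S) (D : Set V)
  (H : S → S → Prop) [Fintype V]

variable (hsub : ∀ a b : S, G.Adj a b → G'.Adj (a : V) (b : V))
  (hG'b : Bridgeless G') (hDS : D ⊆ S) (hD' : Dominating G' D)
  (hD : Dominating G {a : S | (a : V) ∈ D}) (hH : IsOrientation G H)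

include hsub hG'b hDS hD' hD hH

/-- out-certificate: every vertex outside `S` reaches `D` within two arcs. -/
theorem cert_out {v : V} (hv : v ∉ S) :
    ∃ d ∈ D, ∃ m ≤ 2, Reach (Ext G' S G D H) m v d := by
  by_cases hc : CaseA G' D v
  · obtain ⟨h1, _, _⟩ := dom2_spec G' D hc
    exact ⟨dom2 G' D v, h1, 1, by norm_num,
      Reach.single ((caseA_arcs G' S G D H hDS hD' hv hc).2)⟩
  · rcases Bool.dichotomy (pol G' S D H v) with hp | hp
    · exact ⟨dom G' D v, (dom_spec' G' S D hDS hD' hv).1, 1, by norm_num,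
        Reach.single (star_out G' S G D H hDS hD' hv hc hp)⟩
    · by_cases hb : BOut G' S D H v
      · obtain ⟨u, huS, huD, hadj, hnf⟩ := hb
        have harc1 : Ext G' S G D H v u := sigma_out G' S G D H hv huS huD hadj hnf
        have htd : ToD S D H u :=
          (fromD_or_toD S G D H hD hH huS huD).resolve_left hnf
        obtain ⟨hu', a, haD, hHa⟩ := htd
        have harc2 : Ext G' S G D H ((⟨u, hu'⟩ : S) : V) (a : V) := ext_of_H G' S G D H hsub hH hHa
        exact ⟨a, haD, 2, le_refl 2, (Reach.single harc1).tail harc2⟩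
      · by_cases hhard : Hard G' S D H v
        · obtain ⟨hs, _⟩ := serve G' S D H hG'b hDS hD' hhard
          obtain ⟨w, hadj, hwS, hout⟩ := hs hp
          have harc1 : Ext G' S G D H v w := by
            refine xx_arc G' S G D H hv hwS hadj (Or.inr hp) hout ?_
            rintro ⟨hi, ho⟩
            rcases ho with ho | ho
            · exact hc ho
            · rw [hp] at ho; exact Bool.false_ne_true ho.symm
          by_cases hcw : CaseA G' D w
          · obtain ⟨h1, _, _⟩ := dom2_spec G' D hcw
            exact ⟨dom2 G' D w, h1, 2, le_refl 2,
              (Reach.single harc1).tail ((caseA_arcs G' S G D H hDS hD' hwS hcw).2)⟩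
          · have hpw : pol G' S D H w = false := by
              rcases hout with h | h
              · exact absurd h hcw
              · exact h
            exact ⟨dom G' D w, (dom_spec' G' S D hDS hD' hwS).1, 2, le_refl 2,
              (Reach.single harc1).tail (star_out G' S G D H hDS hD' hwS hcw hpw)⟩
        · exfalso
          have hbin : BIn G' S D H v := by
            by_contra hbin
            exact hhard ⟨hv, hc, hbin, hb⟩
          have : pol G' S D H v = false := by
            rw [pol, if_neg hhard, polB, if_neg hc, if_neg hb]
          rw [this] at hp
          exact Bool.false_ne_true hp

/-- in-certificate: every vertex outside `S` is reached from `D` within two arcs. -/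
theorem cert_in {v : V} (hv : v ∉ S) :
    ∃ d ∈ D, ∃ m ≤ 2, Reach (Ext G' S G D H) m d v := by
  by_cases hc : CaseA G' D v
  · exact ⟨dom G' D v, (dom_spec' G' S D hDS hD' hv).1, 1, by norm_num,
      Reach.single ((caseA_arcs G' S G D H hDS hD' hv hc).1)⟩
  · rcases Bool.dichotomy (pol G' S D H v) with hp | hp
    · by_cases hb : BIn G' S D H v
      · obtain ⟨u, huS, huD, hadj, hf⟩ := hb
        have hf' := hf
        obtain ⟨hu', a, haD, hHa⟩ := hf'
        have harc1 : Ext G' S G D H (a : V) ((⟨u, hu'⟩ : S) : V) := ext_of_H G' S G D H hsub hH hHa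
        have harc2 : Ext G' S G D H u v := sigma_in G' S G D H hv huS huD hadj hf
        exact ⟨a, haD, 2, le_refl 2, (Reach.single harc1).tail harc2⟩
      · by_cases hhard : Hard G' S D H v
        · obtain ⟨_, hs⟩ := serve G' S D H hG'b hDS hD' hhard
          obtain ⟨w, hadj, hwS, hin⟩ := hs hp
          have harc2 : Ext G' S G D H w v := by
            refine xx_arc G' S G D H hwS hv hadj.symm hin (Or.inr hp) ?_
            rintro ⟨hi, ho⟩
            rcases hi with hi | hi
            · exact hc hi
            · rw [hp] at hi; exact Bool.false_ne_true hi
          by_cases hcw : CaseA G' D w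
          · exact ⟨dom G' D w, (dom_spec' G' S D hDS hD' hwS).1, 2, le_refl 2,
              (Reach.single ((caseA_arcs G' S G D H hDS hD' hwS hcw).1)).tail harc2⟩
          · have hpw : pol G' S D H w = true := by
              rcases hin with h | h
              · exact absurd h hcw
              · exact h
            exact ⟨dom G' D w, (dom_spec' G' S D hDS hD' hwS).1, 2, le_refl 2,
              (Reach.single (star_in G' S G D H hDS hD' hwS hcw hpw)).tail harc2⟩
        · exfalso
          have hbout : BOut G' S D H v := by
            by_contra hbout
            exact hhard ⟨hv, hc, hb, hbout⟩
          have : pol G' S D H v = true := by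
            rw [pol, if_neg hhard, polB, if_neg hc, if_pos hbout]
          rw [this] at hp
          exact Bool.false_ne_true hp.symm
    · exact ⟨dom G' D v, (dom_spec' G' S D hDS hD' hv).1, 1, by norm_num,
        Reach.single (star_in G' S G D H hDS hD' hv hc hp)⟩

end Certs

section Final

set_option linter.unusedSectionVars false
set_option linter.unusedVariables false

variable {V : Type*} (G' : SimpleGraph V) (S : Set V) (G : SimpleGraph S) (D : Set V)
  (H : S → S → Prop) [Fintype V] [Fintype S]

variable (hsub : ∀ a b : S, G.Adj a b → G'.Adj (a : V) (b : V))
  (hG'b : Bridgeless G') (hDS : D ⊆ S) (hD' : Dominating G' D)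
  (hD : Dominating G {a : S | (a : V) ∈ D}) (hH : IsOrientation G H)
  (hsc : StronglyConnected H)

include hsub hH hsc in
theorem ext_reach_H (a b : S) :
    Reach (Ext G' S G D H) (ddist H a b) (a : V) (b : V) :=
  Reach.map Subtype.val (fun _ _ h => ext_of_H G' S G D H hsub hH h)
    (reach_ddist (reach_of_reflTransGen (hsc a b)))

theorem ddist_le_part (a b : S) :
    ddist H a b ≤ ddiamPart H {x : S | (x : V) ∈ D}
      ((if a ∈ {x : S | (x : V) ∈ D} then 0 else 1) +
        (if b ∈ {x : S | (x : V) ∈ D} then 0 else 1)) := by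
  have h := Finset.le_sup (f := fun p : S × S =>
      if (if p.1 ∈ {x : S | (x : V) ∈ D} then 0 else 1) +
          (if p.2 ∈ {x : S | (x : V) ∈ D} then 0 else 1) =
          ((if a ∈ {x : S | (x : V) ∈ D} then 0 else 1) +
            (if b ∈ {x : S | (x : V) ∈ D} then 0 else 1))
      then ddist H p.1 p.2 else 0) (Finset.mem_univ (a, b))
  rw [ddiamPart]
  refine le_trans ?_ h
  simp

include hsub hG'b hDS hD' hD hH hsc in
theorem ext_sc : StronglyConnected (Ext G' S G D H) := by
  intro u v
  have lift : ∀ (a b : S), Relation.ReflTransGen (Ext G' S G D H) (a : V) (b : V) := by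
    intro a b
    exact Relation.ReflTransGen.lift Subtype.val
      (fun _ _ h => ext_of_H G' S G D H hsub hH h) _ _ (hsc a b)
  by_cases hu : u ∈ S
  · by_cases hv : v ∈ S
    · exact lift ⟨u, hu⟩ ⟨v, hv⟩
    · obtain ⟨d, hdD, m, _, hr⟩ := cert_in G' S G D H hsub hG'b hDS hD' hD hH hv
      exact (lift ⟨u, hu⟩ ⟨d, hDS hdD⟩).trans hr.reflTransGen
  · obtain ⟨d1, hd1, m1, _, hr1⟩ := cert_out G' S G D H hsub hG'b hDS hD' hD hH hu
    by_cases hv : v ∈ S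
    · exact hr1.reflTransGen.trans (lift ⟨d1, hDS hd1⟩ ⟨v, hv⟩)
    · obtain ⟨d2, hd2, m2, _, hr2⟩ := cert_in G' S G D H hsub hG'b hDS hD' hD hH hv
      exact (hr1.reflTransGen.trans (lift ⟨d1, hDS hd1⟩ ⟨d2, hDS hd2⟩)).trans hr2.reflTransGen

include hsub hG'b hDS hD' hD hH hsc in
theorem ext_ddiam_le :
    ddiam (Ext G' S G D H) ≤ max (ddiamPart H {a : S | (a : V) ∈ D} 0 + 4)
      (max (ddiamPart H {a : S | (a : V) ∈ D} 1 + 2)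
        (ddiamPart H {a : S | (a : V) ∈ D} 2)) := by
  set P0 := ddiamPart H {a : S | (a : V) ∈ D} 0 with hP0
  set P1 := ddiamPart H {a : S | (a : V) ∈ D} 1 with hP1
  set P2 := ddiamPart H {a : S | (a : V) ∈ D} 2 with hP2
  have hm0 : P0 + 4 ≤ max (P0 + 4) (max (P1 + 2) P2) := le_max_left _ _
  have hm1 : P1 + 2 ≤ max (P0 + 4) (max (P1 + 2) P2) :=
    le_trans (le_max_left _ _) (le_max_right _ _)
  have hm2 : P2 ≤ max (P0 + 4) (max (P1 + 2) P2) :=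
    le_trans (le_max_right _ _) (le_max_right _ _)
  rw [ddiam]
  refine Finset.sup_le ?_
  rintro ⟨u, v⟩ -
  simp only
  by_cases hu : u ∈ S
  · by_cases hv : v ∈ S
    · have hr := ext_reach_H G' S G D H hsub hH hsc ⟨u, hu⟩ ⟨v, hv⟩
      have h1 := ddist_le hr
      have h2 := ddist_le_part S D H (⟨u, hu⟩ : S) (⟨v, hv⟩ : S)
      by_cases huD : u ∈ D <;> by_cases hvD : v ∈ D
      · simp only [Set.mem_setOf_eq, huD, hvD, if_pos, Nat.add_zero] at h2
        exact le_trans (h1.trans h2) (le_trans (Nat.le_add_right _ 4) hm0)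
      · simp only [Set.mem_setOf_eq, huD, hvD, if_pos, if_neg, Nat.zero_add] at h2
        norm_num at h2
        exact le_trans (h1.trans h2) (le_trans (Nat.le_add_right _ 2) hm1)
      · simp only [Set.mem_setOf_eq, huD, hvD] at h2
        norm_num at h2
        exact le_trans (h1.trans h2) (le_trans (Nat.le_add_right _ 2) hm1)
      · simp only [Set.mem_setOf_eq, huD, hvD] at h2
        norm_num at h2
        exact le_trans (h1.trans h2) hm2
    · obtain ⟨d, hdD, m, hm, hr⟩ := cert_in G' S G D H hsub hG'b hDS hD' hD hH hv
      have hr2 := (ext_reach_H G' S G D H hsub hH hsc ⟨u, hu⟩ ⟨d, hDS hdD⟩).comp hr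
      have h1 := ddist_le hr2
      have h2 := ddist_le_part S D H (⟨u, hu⟩ : S) (⟨d, hDS hdD⟩ : S)
      by_cases huD : u ∈ D
      · simp only [Set.mem_setOf_eq, huD, hdD] at h2
        norm_num at h2
        calc ddist (Ext G' S G D H) u v ≤ ddist H ⟨u, hu⟩ ⟨d, hDS hdD⟩ + m := h1
          _ ≤ P0 + 4 := by omega
          _ ≤ _ := hm0
      · simp only [Set.mem_setOf_eq, huD, hdD] at h2
        norm_num at h2
        calc ddist (Ext G' S G D H) u v ≤ ddist H ⟨u, hu⟩ ⟨d, hDS hdD⟩ + m := h1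
          _ ≤ P1 + 2 := by omega
          _ ≤ _ := hm1
  · obtain ⟨d1, hd1, m1, hm1', hr1⟩ := cert_out G' S G D H hsub hG'b hDS hD' hD hH hu
    by_cases hv : v ∈ S
    · have hr2 := hr1.comp (ext_reach_H G' S G D H hsub hH hsc ⟨d1, hDS hd1⟩ ⟨v, hv⟩)
      have h1 := ddist_le hr2
      have h2 := ddist_le_part S D H (⟨d1, hDS hd1⟩ : S) (⟨v, hv⟩ : S)
      by_cases hvD : v ∈ D
      · simp only [Set.mem_setOf_eq, hd1, hvD] at h2
        norm_num at h2
        calc ddist (Ext G' S G D H) u v ≤ m1 + ddist H ⟨d1, hDS hd1⟩ ⟨v, hv⟩ := h1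
          _ ≤ P0 + 4 := by omega
          _ ≤ _ := hm0
      · simp only [Set.mem_setOf_eq, hd1, hvD] at h2
        norm_num at h2
        calc ddist (Ext G' S G D H) u v ≤ m1 + ddist H ⟨d1, hDS hd1⟩ ⟨v, hv⟩ := h1
          _ ≤ P1 + 2 := by omega
          _ ≤ _ := hm1
    · obtain ⟨d2, hd2, m2, hm2', hr2⟩ := cert_in G' S G D H hsub hG'b hDS hD' hD hH hv
      have hr3 := (hr1.comp (ext_reach_H G' S G D H hsub hH hsc ⟨d1, hDS hd1⟩ ⟨d2, hDS hd2⟩)).comp hr2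
      have h1 := ddist_le hr3
      have h2 := ddist_le_part S D H (⟨d1, hDS hd1⟩ : S) (⟨d2, hDS hd2⟩ : S)
      simp only [Set.mem_setOf_eq, hd1, hd2] at h2
      norm_num at h2
      calc ddist (Ext G' S G D H) u v
          ≤ m1 + ddist H ⟨d1, hDS hd1⟩ ⟨d2, hDS hd2⟩ + m2 := h1
        _ ≤ P0 + 4 := by omega
        _ ≤ _ := hm0

end Final

end OrientExt

/-- Lemma on extending an orientation of a bridgeless dominating subgraph `G` of `G'`
to a strongly connected orientation of `G'` with controlled diameter. -/
theorem orientation_extension {V : Type*} [Fintype V] (G' : SimpleGraph V)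
    (S : Set V) [Fintype S] (G : SimpleGraph S)
    (hsub : ∀ a b : S, G.Adj a b → G'.Adj (a : V) (b : V))
    (hGc : G.Connected) (hGb : Bridgeless G)
    (hG'c : G'.Connected) (hG'b : Bridgeless G')
    (D : Set V) (hDS : D ⊆ S) (hD' : Dominating G' D)
    (hD : Dominating G {a : S | (a : V) ∈ D})
    (H : S → S → Prop) (hH : IsOrientation G H) (hsc : StronglyConnected H) :
    ∃ H' : V → V → Prop, IsOrientation G' H' ∧ StronglyConnected H' ∧
      ddiam H' ≤ max (ddiamPart H {a : S | (a : V) ∈ D} 0 + 4)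
        (max (ddiamPart H {a : S | (a : V) ∈ D} 1 + 2)
          (ddiamPart H {a : S | (a : V) ∈ D} 2)) := by
  
  exact ⟨OrientExt.Ext G' S G D H,
    OrientExt.ext_isOrientation G' S G D H hH,
    OrientExt.ext_sc G' S G D H hsub hG'b hDS hD' hD hH hsc,
    OrientExt.ext_ddiam_le G' S G D H hsub hG'b hDS hD' hD hH hsc⟩
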